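/- Let f(x) = ‖x‖_α be the ℓ_α norm on ℝ^m with α ∈ [2, ∞). Then for any x ≠ 0 at which the Hessian H_f(x) of f exists, all eigenvalues of H_f(x) are nonnegative and bounded above by (α−1)/‖x‖_α when m > 1, and the Hessian is zero when m = 1. -/

import Mathlib

open scoped BigOperators

/-- The ℓ_α norm on `ℝ^m`. -/
noncomputable def lpnorm (α : ℝ) {m : ℕ} (x : Fin m → ℝ) : ℝ :=
  (∑ i, |x i| ^ α) ^ (1 / α)

section aux

lemma hasDerivAt_mul_abs_rpow {β : ℝ} (hβ : 0 ≤ β) (u : ℝ) :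
    HasDerivAt (fun w : ℝ => w * |w| ^ β) ((β + 1) * |u| ^ β) u := by
  rcases lt_trichotomy u 0 with hu | hu | hu
  · have hev : (fun w : ℝ => w * |w| ^ β) =ᶠ[nhds u] (fun w : ℝ => -((-w) ^ β * (-w))) := by
      filter_upwards [eventually_lt_nhds hu] with w hw
      rw [abs_of_neg hw]; ring
    have h2 : HasDerivAt (fun w : ℝ => (-w)) (-1 : ℝ) u := (hasDerivAt_id u).neg
    have h3 := h2.rpow_const (p := β) (Or.inl (neg_ne_zero.mpr hu.ne))
    have key := (h3.mul h2).neg.congr_of_eventuallyEq hev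
    refine key.congr_deriv ?_
    have h4 : (-u) ^ β = (-u) ^ (β - 1) * (-u) := by
      rw [← Real.rpow_add_one (neg_ne_zero.mpr hu.ne) (β - 1)]; ring_nf
    rw [abs_of_neg hu, h4]; ring
  · subst hu
    rcases eq_or_lt_of_le hβ with hβ0 | hβ0
    · simp only [← hβ0, Real.rpow_zero, mul_one]
      exact (hasDerivAt_id' (0:ℝ)).congr_deriv (zero_add 1).symm
    · rw [hasDerivAt_iff_tendsto_slope]
      have h0 : |(0:ℝ)| ^ β = 0 := by
        rw [abs_zero, Real.zero_rpow hβ0.ne']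
      rw [h0, mul_zero]
      have ht : Filter.Tendsto (fun w : ℝ => |w| ^ β) (nhdsWithin 0 {(0:ℝ)}ᶜ) (nhds 0) := by
        have : Filter.Tendsto (fun w : ℝ => |w| ^ β) (nhds 0) (nhds (|(0:ℝ)| ^ β)) := by
          apply ContinuousAt.tendsto
          exact (Real.continuousAt_rpow_const _ _ (Or.inr hβ)).comp continuous_abs.continuousAt
        rw [h0] at this
        exact this.mono_left nhdsWithin_le_nhds
      refine ht.congr' ?_
      filter_upwards [self_mem_nhdsWithin] with w hw
      simp only [slope_def_field, sub_zero, mul_zero, zero_mul]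
      rw [eq_div_iff (by simpa using hw)]
      ring
  · have hev : (fun w : ℝ => w * |w| ^ β) =ᶠ[nhds u] (fun w : ℝ => w ^ β * w) := by
      filter_upwards [eventually_gt_nhds hu] with w hw
      rw [abs_of_pos hw]; ring
    have h3 : HasDerivAt (fun w : ℝ => w ^ β) (β * u ^ (β - 1)) u := by
      simpa using (hasDerivAt_id u).rpow_const (Or.inl (ne_of_gt hu))
    have key := (h3.mul (hasDerivAt_id u)).congr_of_eventuallyEq hev
    refine key.congr_deriv ?_
    have h4 : u ^ β = u ^ (β - 1) * u := by
      rw [← Real.rpow_add_one (ne_of_gt hu) (β - 1)]; ring_nf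
    rw [abs_of_pos hu, h4]; simp [id]; ring


lemma bilin_expand {m : ℕ} (B : ContinuousMultilinearMap ℝ (fun _ : Fin 2 => (Fin m → ℝ)) ℝ)
    (v : Fin m → ℝ) :
    B ![v, v] = ∑ i, ∑ j, v i * v j * B ![Pi.single i (1:ℝ), Pi.single j (1:ℝ)] := by
  have hv : ![v, v] = fun _ : Fin 2 => ∑ i, v i • (Pi.single i (1:ℝ) : Fin m → ℝ) := by
    funext k j
    have : (∑ i, v i • (Pi.single i (1:ℝ) : Fin m → ℝ)) j = v j := by
      rw [Finset.sum_apply]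
      simp [Pi.single_apply]
    fin_cases k <;> simp [this]
  rw [hv]
  rw [ContinuousMultilinearMap.map_sum (g := fun _ i => v i • (Pi.single i (1:ℝ) : Fin m → ℝ))]
  rw [← (finTwoArrowEquiv (Fin m)).symm.sum_comp]
  rw [Fintype.sum_prod_type]
  refine Finset.sum_congr rfl fun i _ => Finset.sum_congr rfl fun j _ => ?_
  have h1 : (fun k : Fin 2 => v (((finTwoArrowEquiv (Fin m)).symm (i, j)) k) •
      (Pi.single (((finTwoArrowEquiv (Fin m)).symm (i, j)) k) (1:ℝ) : Fin m → ℝ))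
      = fun k : Fin 2 => (![v i, v j] : Fin 2 → ℝ) k •
        (![Pi.single i (1:ℝ), Pi.single j (1:ℝ)] : Fin 2 → (Fin m → ℝ)) k := by
    funext k
    fin_cases k <;> simp [finTwoArrowEquiv]
  rw [h1, ContinuousMultilinearMap.map_smul_univ]
  simp [Fin.prod_univ_two]

section main
variable {m : ℕ} {α : ℝ}

/-- Key computation: value of the quadratic form of the Hessian. -/
lemma quadform_eq (hα : 2 ≤ α) (x : Fin m → ℝ) (hx : x ≠ 0)
    (f : (Fin m → ℝ) → ℝ) (hf : ∀ y, f y = lpnorm α y)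
    (hdiff : ContDiffAt ℝ 2 f x) (v : Fin m → ℝ) :
    iteratedFDeriv ℝ 2 f x ![v, v] =
      (α - 1) * ((∑ j, |x j| ^ α) ^ (1/α - 1) * (∑ j, |x j| ^ (α - 2) * v j ^ 2)
        - (∑ j, |x j| ^ α) ^ (1/α - 2) * (∑ j, x j * |x j| ^ (α - 2) * v j) ^ 2) := by
  have hα0 : (0:ℝ) < α := by linarith
  have hα1 : (1:ℝ) < α := by linarith
  set S : ℝ := ∑ j, |x j| ^ α with hSdef
  have hS : 0 < S := by
    have hex : ∃ j, x j ≠ 0 := by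
      by_contra h
      push_neg at h
      exact hx (funext fun j => h j)
    obtain ⟨j, hj⟩ := hex
    have : (0:ℝ) < |x j| ^ α := Real.rpow_pos_of_pos (abs_pos.mpr hj) α
    exact Finset.sum_pos' (fun i _ => by positivity) ⟨j, Finset.mem_univ j, this⟩
  set φ : ℝ → ℝ := fun t => ∑ j, |x j + t * v j| ^ α with hφdef
  set dφ : ℝ → ℝ := fun t => ∑ j, α * ((x j + t * v j) * |x j + t * v j| ^ (α - 2)) * v j
    with hdφdef
  have inner : ∀ (j : Fin m) (t : ℝ), HasDerivAt (fun t : ℝ => x j + t * v j) (v j) t := by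
    intro j t
    simpa using ((hasDerivAt_id t).mul_const (v j)).const_add (x j)
  have hφ : ∀ t, HasDerivAt φ (dφ t) t := by
    intro t
    apply HasDerivAt.fun_sum
    intro j _
    have h1 := (hasDerivAt_abs_rpow (x j + t * v j) hα1).comp t (inner j t)
    have h2 : α * ((x j + t * v j) * |x j + t * v j| ^ (α - 2)) * v j
        = α * |x j + t * v j| ^ (α - 2) * (x j + t * v j) * v j := by ring
    rw [h2]
    exact h1
  have hφ0 : φ 0 = S := by simp [hφdef, hSdef]
  have hdφ0 : dφ 0 = α * ∑ j, x j * |x j| ^ (α - 2) * v j := by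
    simp only [hdφdef, zero_mul, add_zero, Finset.mul_sum]
    exact Finset.sum_congr rfl fun j _ => by ring
  -- second derivative of φ at 0
  have hdφ' : HasDerivAt dφ (α * (α - 1) * ∑ j, |x j| ^ (α - 2) * v j ^ 2) 0 := by
    have key : HasDerivAt dφ (∑ j, α * ((α - 2 + 1) * |x j + 0 * v j| ^ (α - 2) * v j) * v j) 0 := by
      apply HasDerivAt.fun_sum
      intro j _
      have h2 := ((hasDerivAt_mul_abs_rpow (by linarith : (0:ℝ) ≤ α - 2)
        (x j + 0 * v j)).comp (0:ℝ) (inner j 0))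
      exact (h2.const_mul α).mul_const (v j)
    convert key using 1
    rw [Finset.mul_sum]
    exact Finset.sum_congr rfl fun j _ => by simp; ring
  -- φ positive near 0
  have hpos : ∀ᶠ t in nhds (0:ℝ), 0 < φ t := by
    have hc : ContinuousAt φ 0 := (hφ 0).continuousAt
    have := hc.eventually_mem (s := Set.Ioi (0:ℝ)) (by rw [hφ0]; exact Ioi_mem_nhds hS)
    simpa using this
  -- the curve and g
  set c : ℝ → (Fin m → ℝ) := fun t => x + t • v with hcdef
  have hc : ∀ t, HasDerivAt c v t := by
    intro t
    simpa [hcdef] using ((hasDerivAt_id t).smul_const v).const_add x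
  have hc0 : c 0 = x := by simp [hcdef]
  set g : ℝ → ℝ := fun t => f (c t) with hgdef
  have hgφ : g = fun t => φ t ^ (1/α) := by
    funext t
    simp only [hgdef, hf, lpnorm, hφdef, hcdef]
    congr 1
  -- explicit derivative of g near 0
  set e : ℝ → ℝ := fun t => dφ t * ((1/α) * φ t ^ (1/α - 1)) with hedef
  have hge : ∀ᶠ t in nhds (0:ℝ), HasDerivAt g (e t) t := by
    filter_upwards [hpos] with t ht
    rw [hgφ]
    have := (hφ t).rpow_const (p := 1/α) (Or.inl ht.ne')
    convert this using 1
    simp [hedef]; ring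
  -- derivative of e at 0
  set E : ℝ := (α * (α - 1) * ∑ j, |x j| ^ (α - 2) * v j ^ 2) * ((1/α) * S ^ (1/α - 1))
    + dφ 0 * ((1/α) * (dφ 0 * (1/α - 1) * S ^ (1/α - 1 - 1))) with hEdef
  have he : HasDerivAt e E 0 := by
    have hr : HasDerivAt (fun t => φ t ^ (1/α - 1)) (dφ 0 * (1/α - 1) * φ 0 ^ (1/α - 1 - 1)) 0 :=
      (hφ 0).rpow_const (Or.inl (by rw [hφ0]; exact hS.ne'))
    have := hdφ'.mul (hr.const_mul (1/α))
    rw [hφ0] at this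
    exact this
  -- abstract side
  have hev2 : ∀ᶠ y in nhds x, ContDiffAt ℝ 2 f y := hdiff.eventually (by norm_num)
  have hct : ∀ᶠ t in nhds (0:ℝ), ContDiffAt ℝ 2 f (c t) := by
    have hcc : ContinuousAt c 0 := (hc 0).continuousAt
    rw [← hc0] at hev2
    exact hcc.eventually hev2
  have hd : ∀ᶠ t in nhds (0:ℝ), HasDerivAt g (fderiv ℝ f (c t) v) t := by
    filter_upwards [hct] with t ht
    exact (ht.differentiableAt (by norm_num)).hasFDerivAt.comp_hasDerivAt t (hc t)
  -- e agrees with the abstract derivative near 0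
  have heq : (fun t => fderiv ℝ f (c t) v) =ᶠ[nhds (0:ℝ)] e := by
    filter_upwards [hd, hge] with t h1 h2
    exact h1.unique h2
  -- second abstract derivative
  have hf' : DifferentiableAt ℝ (fderiv ℝ f) x :=
    (hdiff.fderiv_right (m := 1) (by norm_num)).differentiableAt (by norm_num)
  have habs : HasDerivAt (fun t => fderiv ℝ f (c t) v)
      ((fderiv ℝ (fderiv ℝ f) x v) v) 0 := by
    have h1 : HasDerivAt (fun t => fderiv ℝ f (c t)) (fderiv ℝ (fderiv ℝ f) x v) 0 := by
      have h0 : HasFDerivAt (fderiv ℝ f) (fderiv ℝ (fderiv ℝ f) x) (c 0) :=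
        hc0.symm ▸ hf'.hasFDerivAt
      exact h0.comp_hasDerivAt 0 (hc 0)
    exact ((ContinuousLinearMap.apply ℝ ℝ v).hasFDerivAt.comp_hasDerivAt 0 h1)
  have habs' : HasDerivAt (fun t => fderiv ℝ f (c t) v) E 0 :=
    he.congr_of_eventuallyEq heq
  have hmain : (fderiv ℝ (fderiv ℝ f) x v) v = E := habs.unique habs'
  rw [iteratedFDeriv_two_apply]
  simp only [Matrix.cons_val_zero, Matrix.cons_val_one, Matrix.head_cons]
  rw [hmain, hEdef, hdφ0]
  have hexp : S ^ (1/α - 1 - 1) = S ^ (1/α - 2) := by congr 1; ring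
  rw [hexp]
  field_simp
  ring

lemma quad_bounds (hα : 2 ≤ α) (x v : Fin m → ℝ) (hS : 0 < ∑ j, |x j| ^ α) :
    0 ≤ (α - 1) * ((∑ j, |x j| ^ α) ^ (1/α - 1) * (∑ j, |x j| ^ (α - 2) * v j ^ 2)
        - (∑ j, |x j| ^ α) ^ (1/α - 2) * (∑ j, x j * |x j| ^ (α - 2) * v j) ^ 2) ∧
    (α - 1) * ((∑ j, |x j| ^ α) ^ (1/α - 1) * (∑ j, |x j| ^ (α - 2) * v j ^ 2)
        - (∑ j, |x j| ^ α) ^ (1/α - 2) * (∑ j, x j * |x j| ^ (α - 2) * v j) ^ 2)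
      ≤ (α - 1) / ((∑ j, |x j| ^ α) ^ (1/α)) * ∑ j, v j ^ 2 := by
  have hα0 : (0:ℝ) < α := by linarith
  set S : ℝ := ∑ j, |x j| ^ α with hSdef
  set T : ℝ := ∑ j, |x j| ^ (α - 2) * v j ^ 2 with hTdef
  set P : ℝ := ∑ j, x j * |x j| ^ (α - 2) * v j with hPdef
  have hα1 : (0:ℝ) ≤ α - 1 := by linarith
  have hT : 0 ≤ T := Finset.sum_nonneg fun j _ => by positivity
  -- Cauchy-Schwarz : P^2 ≤ S * T
  have hCS : P ^ 2 ≤ S * T := by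
    set a : Fin m → ℝ := fun j => x j * |x j| ^ ((α - 2)/2) with hadef
    set b : Fin m → ℝ := fun j => |x j| ^ ((α - 2)/2) * v j with hbdef
    have hab : ∀ j, a j * b j = x j * |x j| ^ (α - 2) * v j := by
      intro j
      rcases eq_or_ne (x j) 0 with hj | hj
      · simp [hadef, hbdef, hj]
      · have h := abs_pos.mpr hj
        simp only [hadef, hbdef]
        rw [show x j * |x j| ^ ((α-2)/2) * (|x j| ^ ((α-2)/2) * v j)
            = x j * (|x j| ^ ((α-2)/2) * |x j| ^ ((α-2)/2)) * v j by ring,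
          ← Real.rpow_add h]
        ring_nf
    have ha2 : ∀ j, a j ^ 2 = |x j| ^ α := by
      intro j
      rcases eq_or_ne (x j) 0 with hj | hj
      · simp [hadef, hj, Real.zero_rpow hα0.ne']
      · have h := abs_pos.mpr hj
        simp only [hadef]
        rw [mul_pow, ← sq_abs (x j), ← Real.rpow_two , ← Real.rpow_natCast (|x j| ^ ((α-2)/2)) 2,
          ← Real.rpow_mul (abs_nonneg _), ← Real.rpow_add h]
        norm_num
    have hb2 : ∀ j, b j ^ 2 = |x j| ^ (α - 2) * v j ^ 2 := by
      intro j
      simp only [hbdef]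
      rw [mul_pow, ← Real.rpow_natCast (|x j| ^ ((α-2)/2)) 2, ← Real.rpow_mul (abs_nonneg _)]
      norm_num
    have hcs := Finset.sum_mul_sq_le_sq_mul_sq Finset.univ a b
    rw [Finset.sum_congr rfl (fun j _ => hab j), Finset.sum_congr rfl (fun j _ => ha2 j),
      Finset.sum_congr rfl (fun j _ => hb2 j)] at hcs
    exact hcs
  constructor
  · apply mul_nonneg hα1
    rw [sub_nonneg]
    calc S ^ (1/α - 2) * P ^ 2 ≤ S ^ (1/α - 2) * (S * T) := by
          apply mul_le_mul_of_nonneg_left hCS (Real.rpow_nonneg hS.le _)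
      _ = S ^ (1/α - 1) * T := by
          have hSS : S ^ (1/α - 2) * S = S ^ (1/α - 1) := by
            rw [← Real.rpow_add_one hS.ne']
            congr 1; ring
          rw [show S ^ (1/α - 2) * (S * T) = (S ^ (1/α - 2) * S) * T by ring, hSS]
  · have h1 : (α - 1) * (S ^ (1/α - 1) * T - S ^ (1/α - 2) * P ^ 2)
        ≤ (α - 1) * (S ^ (1/α - 1) * T) := by
      apply mul_le_mul_of_nonneg_left _ hα1
      have : 0 ≤ S ^ (1/α - 2) * P ^ 2 := by positivity
      linarith
    refine h1.trans ?_
    have hxj : ∀ j, |x j| ^ (α - 2) ≤ S ^ ((1/α) * (α - 2)) := by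
      intro j
      have h2 : |x j| ≤ S ^ (1/α : ℝ) := by
        have h3 : |x j| ^ α ≤ S := Finset.single_le_sum (f := fun j => |x j| ^ α)
          (fun i _ => by positivity) (Finset.mem_univ j)
        have h4 := Real.rpow_le_rpow (by positivity) h3 (by positivity : (0:ℝ) ≤ 1/α)
        rwa [← Real.rpow_mul (abs_nonneg _), mul_one_div_cancel hα0.ne', Real.rpow_one] at h4
      calc |x j| ^ (α - 2) ≤ (S ^ (1/α : ℝ)) ^ (α - 2) :=
            Real.rpow_le_rpow (abs_nonneg _) h2 (by linarith)
        _ = S ^ ((1/α) * (α - 2)) := by rw [← Real.rpow_mul hS.le]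
    have hTle : T ≤ S ^ ((1/α) * (α - 2)) * ∑ j, v j ^ 2 := by
      rw [Finset.mul_sum]
      apply Finset.sum_le_sum
      intro j _
      exact mul_le_mul_of_nonneg_right (hxj j) (sq_nonneg _)
    calc (α - 1) * (S ^ (1/α - 1) * T)
        ≤ (α - 1) * (S ^ (1/α - 1) * (S ^ ((1/α) * (α - 2)) * ∑ j, v j ^ 2)) := by
          apply mul_le_mul_of_nonneg_left _ hα1
          exact mul_le_mul_of_nonneg_left hTle (Real.rpow_nonneg hS.le _)
      _ = (α - 1) / (S ^ (1/α : ℝ)) * ∑ j, v j ^ 2 := by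
          rw [show S ^ (1/α - 1) * (S ^ ((1/α) * (α - 2)) * ∑ j, v j ^ 2)
            = (S ^ (1/α - 1) * S ^ ((1/α) * (α - 2))) * ∑ j, v j ^ 2 by ring,
            ← Real.rpow_add hS]
          have hexp : 1/α - 1 + (1/α) * (α - 2) = -(1/α) := by
            field_simp
            norm_num
          rw [hexp, Real.rpow_neg hS.le, div_eq_mul_inv]
          ring


lemma quad_zero_of_one {α : ℝ} (hα : 2 ≤ α) (x v : Fin 1 → ℝ) (hx0 : x 0 ≠ 0) :
    (α - 1) * ((∑ j, |x j| ^ α) ^ (1/α - 1) * (∑ j, |x j| ^ (α - 2) * v j ^ 2)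
      - (∑ j, |x j| ^ α) ^ (1/α - 2) * (∑ j, x j * |x j| ^ (α - 2) * v j) ^ 2) = 0 := by
  have hα0 : (0:ℝ) < α := by linarith
  have hA : 0 < |x 0| := abs_pos.mpr hx0
  simp only [Fin.sum_univ_one]
  rw [← Real.rpow_mul hA.le α (1/α - 1), ← Real.rpow_mul hA.le α (1/α - 2)]
  have key : |x 0| ^ (α*(1/α-1)) * |x 0| ^ (α-2)
      = |x 0| ^ (α*(1/α-2)) * (|x 0| ^ (2:ℝ) * (|x 0| ^ (α-2) * |x 0| ^ (α-2))) := by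
    rw [← Real.rpow_add hA, ← Real.rpow_add hA, ← Real.rpow_add hA, ← Real.rpow_add hA]
    congr 1
    field_simp
    ring
  have hx2 : x 0 ^ 2 = |x 0| ^ (2:ℝ) := by rw [Real.rpow_two, sq_abs]
  have expand : (x 0 * |x 0| ^ (α - 2) * v 0) ^ 2
      = |x 0| ^ (2:ℝ) * (|x 0| ^ (α-2) * |x 0| ^ (α-2)) * v 0 ^ 2 := by
    rw [mul_pow, mul_pow, hx2]; ring
  rw [expand]
  have h : |x 0| ^ (α*(1/α-1)) * (|x 0| ^ (α - 2) * v 0 ^ 2)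
      - |x 0| ^ (α*(1/α-2)) * (|x 0| ^ (2:ℝ) * (|x 0| ^ (α-2) * |x 0| ^ (α-2)) * v 0 ^ 2)
      = 0 := by
    linear_combination (v 0)^2 * key
  rw [h, mul_zero]

theorem hessian_lp_norm_eigenvalue_bounds {m : ℕ} (hm : 1 ≤ m) (α : ℝ) (hα : 2 ≤ α)
    (x : Fin m → ℝ) (hx : x ≠ 0)
    (f : (Fin m → ℝ) → ℝ) (hf : ∀ y, f y = lpnorm α y)
    (hdiff : ContDiffAt ℝ 2 f x)
    (H : Matrix (Fin m) (Fin m) ℝ)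
    (hH : ∀ i j, H i j =
      iteratedFDeriv ℝ 2 f x ![Pi.single i (1 : ℝ), Pi.single j (1 : ℝ)]) :
    (∀ μ : ℝ, Module.End.HasEigenvalue (Matrix.toLin' H) μ →
      0 ≤ μ ∧ (1 < m → μ ≤ (α - 1) / lpnorm α x)) ∧ (m = 1 → H = 0) := by
  have hα0 : (0:ℝ) < α := by linarith
  have hS : 0 < ∑ j, |x j| ^ α := by
    have hex : ∃ j, x j ≠ 0 := by
      by_contra h
      push_neg at h
      exact hx (funext fun j => h j)
    obtain ⟨j, hj⟩ := hex
    have : (0:ℝ) < |x j| ^ α := Real.rpow_pos_of_pos (abs_pos.mpr hj) α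
    exact Finset.sum_pos' (fun i _ => by positivity) ⟨j, Finset.mem_univ j, this⟩
  constructor
  · intro μ hμ
    obtain ⟨v, hv⟩ := hμ.exists_hasEigenvector
    have hveq : H.mulVec v = μ • v := by
      have := hv.apply_eq_smul
      rwa [Matrix.toLin'_apply] at this
    have hsum : 0 < ∑ i, v i ^ 2 := by
      obtain ⟨i, hi⟩ : ∃ i, v i ≠ 0 := Function.ne_iff.mp hv.2
      exact Finset.sum_pos' (fun i _ => sq_nonneg _) ⟨i, Finset.mem_univ i, by positivity⟩
    have hQv : iteratedFDeriv ℝ 2 f x ![v, v] = μ * ∑ i, v i ^ 2 := by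
      rw [bilin_expand]
      calc ∑ i, ∑ j, v i * v j *
            iteratedFDeriv ℝ 2 f x ![Pi.single i (1:ℝ), Pi.single j (1:ℝ)]
          = ∑ i, v i * (H.mulVec v) i := by
            refine Finset.sum_congr rfl fun i _ => ?_
            simp only [Matrix.mulVec, dotProduct]
            rw [Finset.mul_sum]
            refine Finset.sum_congr rfl fun j _ => ?_
            rw [hH i j]
            ring
        _ = μ * ∑ i, v i ^ 2 := by
            rw [hveq, Finset.mul_sum]
            refine Finset.sum_congr rfl fun i _ => ?_
            simp only [Pi.smul_apply, smul_eq_mul]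
            ring
    have hb := quad_bounds hα x v hS
    rw [quadform_eq hα x hx f hf hdiff v] at hQv
    rw [hQv] at hb
    constructor
    · refine le_of_mul_le_mul_right ?_ hsum
      simpa using hb.1
    · intro _
      refine le_of_mul_le_mul_right ?_ hsum
      calc μ * ∑ i, v i ^ 2 ≤ (α - 1) / ((∑ j, |x j| ^ α) ^ (1/α)) * ∑ j, v j ^ 2 := hb.2
        _ = (α - 1) / lpnorm α x * ∑ i, v i ^ 2 := rfl
  · intro hm1
    subst hm1
    have hx0 : x 0 ≠ 0 := by
      intro h
      apply hx
      funext k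
      rw [Subsingleton.elim k (0 : Fin 1), h]
      rfl
    ext i j
    have hi : i = 0 := Subsingleton.elim i 0
    have hj : j = 0 := Subsingleton.elim j 0
    subst hi; subst hj
    rw [hH 0 0, quadform_eq hα x hx f hf hdiff (Pi.single 0 1),
      quad_zero_of_one hα x (Pi.single 0 1) hx0]
    simp

end main
end aux
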